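/- Under the Setup: (a) for all distinct i, j ∈ {1,2,3,4}, v_j ∉ {−v_i, v_i}; (b) for all distinct i, j, ℓ ∈ {1,2,3,4}, det(v_i, v_j, v_ℓ) ≠ 0; (c) each T_i is contained in an open hemisphere of S², i.e. there exists w ∈ S² with ⟨x, w⟩ > 0 for all x ∈ T_i; (d) for all distinct i, j, ℓ ∈ {1,2,3,4}, 0 < θ_{ij} < π and 0 < Θ_{ijℓ} < π. -/

import Mathlib

open MeasureTheory Real
open scoped RealInnerProductSpace

noncomputable section

abbrev E3 := EuclideanSpace ℝ (Fin 3)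

/-- The surface (area) measure `σ` on the unit sphere `S² ⊆ ℝ³`, normalized so that
`σ(S²) = 4π`. -/
def sphereArea : Measure (Metric.sphere (0 : E3) 1) := (volume : Measure E3).toSphere

/-- The cross product on `ℝ³`. -/
def cross3 (a b : E3) : E3 :=
  (WithLp.equiv 2 (Fin 3 → ℝ)).symm
    ![a 1 * b 2 - a 2 * b 1, a 2 * b 0 - a 0 * b 2, a 0 * b 1 - a 1 * b 0]

/-- The determinant of the 3×3 matrix with rows `a`, `b`, `c`. -/
def det3 (a b c : E3) : ℝ :=
  a 0 * (b 1 * c 2 - b 2 * c 1) - a 1 * (b 0 * c 2 - b 2 * c 0) +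
    a 2 * (b 0 * c 1 - b 1 * c 0)

lemma inner3 (x y : E3) : ⟪x, y⟫ = x 0 * y 0 + x 1 * y 1 + x 2 * y 2 := by
  simp [PiLp.inner_apply, Fin.sum_univ_three, RCLike.inner_apply]; ring

lemma cross3_zero (a b : E3) : cross3 a b 0 = a 1 * b 2 - a 2 * b 1 := rfl
lemma cross3_one (a b : E3) : cross3 a b 1 = a 2 * b 0 - a 0 * b 2 := rfl
lemma cross3_two (a b : E3) : cross3 a b 2 = a 0 * b 1 - a 1 * b 0 := rfl

lemma binet (a b c d : E3) :
    ⟪cross3 a b, cross3 c d⟫ = ⟪a, c⟫ * ⟪b, d⟫ - ⟪a, d⟫ * ⟪b, c⟫ := by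
  simp only [inner3, cross3_zero, cross3_one, cross3_two]; ring

lemma det3_eq_inner (a b c : E3) : ⟪cross3 a b, c⟫ = det3 a b c := by
  simp only [inner3, cross3_zero, cross3_one, cross3_two, det3]; ring

lemma inner_cross_right (a b : E3) : ⟪cross3 a b, b⟫ = 0 := by
  simp only [inner3, cross3_zero, cross3_one, cross3_two]; ring

lemma cross_cross_self (w a b : E3) :
    ⟪cross3 w (cross3 a b), cross3 w (cross3 a b)⟫ =
      ⟪w, b⟫ ^ 2 * ⟪a, a⟫ - 2 * ⟪w, b⟫ * ⟪w, a⟫ * ⟪a, b⟫ + ⟪w, a⟫ ^ 2 * ⟪b, b⟫ := by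
  simp only [inner3, cross3_zero, cross3_one, cross3_two]; ring

lemma cross_cross_eq_zero (w a b : E3) (h1 : ⟪w, a⟫ = 0) (h2 : ⟪w, b⟫ = 0) :
    cross3 w (cross3 a b) = 0 := by
  have h := cross_cross_self w a b
  rw [h1, h2] at h
  refine (inner_self_eq_zero (𝕜 := ℝ)).mp ?_
  rw [h]; ring

lemma inner_lt_one_of_ne (a b : E3) (ha : ‖a‖ = 1) (hb : ‖b‖ = 1) (h : b ≠ a) :
    ⟪a, b⟫ < 1 := by
  have h0 : a - b ≠ 0 := sub_ne_zero.mpr (Ne.symm h)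
  have h1 : ⟪a - b, a - b⟫ ≠ 0 := fun hc => h0 (inner_self_eq_zero.mp hc)
  have h2 : (0:ℝ) ≤ ⟪a - b, a - b⟫ := real_inner_self_nonneg
  have h3 := real_inner_sub_sub_self a b
  have ha' : ⟪a, a⟫ = 1 := by rw [real_inner_self_eq_norm_mul_norm, ha]; ring
  have hb' : ⟪b, b⟫ = 1 := by rw [real_inner_self_eq_norm_mul_norm, hb]; ring
  have : (0:ℝ) < ⟪a - b, a - b⟫ := lt_of_le_of_ne h2 (Ne.symm h1)
  rw [h3, ha', hb'] at this; linarith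

lemma neg_one_lt_inner_of_ne (a b : E3) (ha : ‖a‖ = 1) (hb : ‖b‖ = 1) (h : b ≠ -a) :
    -1 < ⟪a, b⟫ := by
  have hnb : ‖-b‖ = 1 := by rwa [norm_neg]
  have h' : -b ≠ a := fun hc => h (by rw [← hc]; simp)
  have := inner_lt_one_of_ne a (-b) ha hnb h'
  rw [inner_neg_right] at this; linarith

lemma cross_ne_zero (a b : E3) (ha : ‖a‖ = 1) (hb : ‖b‖ = 1) (h1 : b ≠ a) (h2 : b ≠ -a) :
    cross3 a b ≠ 0 := by
  intro hc
  have hB := binet a b a b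
  rw [hc] at hB
  simp only [inner_zero_left] at hB
  have ha' : ⟪a, a⟫ = 1 := by rw [real_inner_self_eq_norm_mul_norm, ha]; ring
  have hb' : ⟪b, b⟫ = 1 := by rw [real_inner_self_eq_norm_mul_norm, hb]; ring
  have hab : ⟪b, a⟫ = ⟪a, b⟫ := real_inner_comm a b
  have hu := inner_lt_one_of_ne a b ha hb h1
  have hl := neg_one_lt_inner_of_ne a b ha hb h2
  rw [ha', hb', hab] at hB
  nlinarith

lemma arccos_lt_pi' {x : ℝ} (h : -1 < x) : Real.arccos x < π := by
  rw [Real.arccos]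
  linarith [Real.neg_pi_div_two_lt_arcsin.2 h]

/-- Proposition 1 (d)–(e): under the setup, (a) `vⱼ ∉ {−vᵢ, vᵢ}` for distinct `i, j`;
(b) `det(vᵢ, vⱼ, v_ℓ) ≠ 0` for distinct `i, j, ℓ`; (c) each `Tᵢ` is contained in an
open hemisphere; (d) `0 < θ_{ij} < π` and `0 < Θ_{ijℓ} < π` for distinct `i, j, ℓ`. -/
theorem vertices_nondegenerate
    (z v : Fin 4 → E3)
    (hz_inj : Function.Injective z)
    (hz_ne : ∀ i, z i ≠ 0)
    (hz_span : Submodule.span ℝ (Set.range z) = ⊤)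
    (hz_sum : ∑ i : Fin 4, z i = 0)
    (T : Fin 4 → Set (Metric.sphere (0 : E3) 1))
    (hT : ∀ i, T i = {x | ⟪(x : E3), z i⟫ =
      Finset.univ.sup' Finset.univ_nonempty fun j : Fin 4 => ⟪(x : E3), z j⟫})
    (hzT : ∀ i, z i = ∫ x in T i, (x : E3) ∂sphereArea)
    (hv_norm : ∀ ℓ, ‖v ℓ‖ = 1)
    (hv_eq : ∀ ℓ i j : Fin 4, i ≠ ℓ → j ≠ ℓ → ⟪z i, v ℓ⟫ = ⟪z j, v ℓ⟫)
    (hv_lt : ∀ ℓ i : Fin 4, i ≠ ℓ → ⟪z ℓ, v ℓ⟫ < ⟪z i, v ℓ⟫)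
    (hv_uniq : ∀ (ℓ : Fin 4) (w : E3), ‖w‖ = 1 →
      (∀ i j : Fin 4, i ≠ ℓ → j ≠ ℓ → ⟪z i, w⟫ = ⟪z j, w⟫) →
      (∀ i : Fin 4, i ≠ ℓ → ⟪z ℓ, w⟫ < ⟪z i, w⟫) → w = v ℓ)
    (θ : Fin 4 → Fin 4 → ℝ)
    (hθ : ∀ i j, θ i j = Real.arccos ⟪v i, v j⟫)
    (Θ : Fin 4 → Fin 4 → Fin 4 → ℝ)
    (hΘ : ∀ i j l, Θ i j l = Real.arccos
      ⟪‖cross3 (v i) (v j)‖⁻¹ • cross3 (v i) (v j),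
        ‖cross3 (v j) (v l)‖⁻¹ • cross3 (v j) (v l)⟫)
    :
    (∀ i j : Fin 4, i ≠ j → v j ≠ v i ∧ v j ≠ -v i) ∧
    (∀ i j ℓ : Fin 4, i ≠ j → i ≠ ℓ → j ≠ ℓ → det3 (v i) (v j) (v ℓ) ≠ 0) ∧
    (∀ i : Fin 4, ∃ w : E3, ‖w‖ = 1 ∧ ∀ x ∈ T i, 0 < ⟪(x : E3), w⟫) ∧
    (∀ i j ℓ : Fin 4, i ≠ j → i ≠ ℓ → j ≠ ℓ →
      (0 < θ i j ∧ θ i j < Real.pi) ∧ (0 < Θ i j ℓ ∧ Θ i j ℓ < Real.pi)) := by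
  -- part (a)
  have parta : ∀ i j : Fin 4, i ≠ j → v j ≠ v i ∧ v j ≠ -v i := by
    intro i j hij
    obtain ⟨k, hki, hkj⟩ :=
      (by decide : ∀ a b : Fin 4, ∃ k : Fin 4, k ≠ a ∧ k ≠ b) i j
    have heq := hv_eq j i k hij hkj
    have hlt := hv_lt i k hki
    constructor
    · intro h; rw [h] at heq; linarith
    · intro h; rw [h, inner_neg_right, inner_neg_right] at heq; linarith
  -- part (b)
  have partb : ∀ i j ℓ : Fin 4, i ≠ j → i ≠ ℓ → j ≠ ℓ →
      det3 (v i) (v j) (v ℓ) ≠ 0 := by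
    intro i j ℓ hij hil hjl hdet
    obtain ⟨m, hmi, hmj, hml⟩ :=
      (by decide : ∀ a b c : Fin 4, ∃ m : Fin 4, m ≠ a ∧ m ≠ b ∧ m ≠ c) i j ℓ
    set n := cross3 (v i) (v j) with hn_def
    have hn : n ≠ 0 :=
      cross_ne_zero _ _ (hv_norm i) (hv_norm j) (parta i j hij).1 (parta i j hij).2
    set w := z ℓ - z m with hw_def
    have hw1 : ⟪w, v i⟫ = 0 := by
      have := hv_eq i ℓ m (Ne.symm hil) hmi
      rw [hw_def, inner_sub_left]; linarith
    have hw2 : ⟪w, v j⟫ = 0 := by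
      have := hv_eq j ℓ m (Ne.symm hjl) hmj
      rw [hw_def, inner_sub_left]; linarith
    have hcross : cross3 w n = 0 := cross_cross_eq_zero w (v i) (v j) hw1 hw2
    have hnl : ⟪n, v ℓ⟫ = 0 := by rw [hn_def, det3_eq_inner, hdet]
    have hb := binet w n (v ℓ) n
    rw [hcross, inner_zero_left] at hb
    have hnn : ⟪n, n⟫ ≠ 0 := fun hc => hn (inner_self_eq_zero.mp hc)
    have hwl : ⟪w, v ℓ⟫ = 0 := by
      rw [hnl, mul_zero] at hb
      have : ⟪w, v ℓ⟫ * ⟪n, n⟫ = 0 := by linarith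
      exact (mul_eq_zero.mp this).resolve_right hnn
    have hlt := hv_lt ℓ m hml
    rw [hw_def, inner_sub_left] at hwl; linarith
  refine ⟨parta, partb, ?_, ?_⟩
  -- part (c)
  · intro i
    refine ⟨‖z i‖⁻¹ • z i, norm_smul_inv_norm (𝕜 := ℝ) (hz_ne i), ?_⟩
    intro x hx
    have hx' : (x : E3) ∈ {y : E3 | ⟪y, z i⟫ =
        Finset.univ.sup' Finset.univ_nonempty fun j : Fin 4 => ⟪y, z j⟫} := by
      rw [← hT i]; exact ⟨x, hx, rfl⟩
    rw [Set.mem_setOf_eq] at hx'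
    have hle : ∀ j : Fin 4, ⟪(x : E3), z j⟫ ≤ ⟪(x : E3), z i⟫ := by
      intro j
      rw [hx']
      exact Finset.le_sup' (fun j : Fin 4 => ⟪(x : E3), z j⟫) (Finset.mem_univ j)
    have hsum : ∑ j : Fin 4, ⟪(x : E3), z j⟫ = 0 := by
      rw [← inner_sum, hz_sum, inner_zero_right]
    rw [Fin.sum_univ_four] at hsum
    have h0 := hle 0; have h1 := hle 1; have h2 := hle 2; have h3 := hle 3
    have hnn : 0 ≤ ⟪(x : E3), z i⟫ := by linarith
    have hpos : 0 < ⟪(x : E3), z i⟫ := by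
      rcases lt_or_eq_of_le hnn with h | h
      · exact h
      · exfalso
        have e0 : ⟪(x : E3), z 0⟫ = 0 := by linarith
        have e1 : ⟪(x : E3), z 1⟫ = 0 := by linarith
        have e2 : ⟪(x : E3), z 2⟫ = 0 := by linarith
        have e3 : ⟪(x : E3), z 3⟫ = 0 := by linarith
        have hall : ∀ j : Fin 4, ⟪(x : E3), z j⟫ = 0 := by
          intro j
          fin_cases j <;> first | exact e0 | exact e1 | exact e2 | exact e3
        have hallr : ∀ y ∈ Set.range z, ⟪(x : E3), y⟫ = 0 := by
          rintro y ⟨j, rfl⟩; exact hall j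
        have hxmem : (x : E3) ∈ Submodule.span ℝ (Set.range z) := by
          rw [hz_span]; trivial
        have hxx : ⟪(x : E3), (x : E3)⟫ = 0 := by
          refine Submodule.span_induction (p := fun y _ => ⟪(x : E3), y⟫ = 0)
            ?_ ?_ ?_ ?_ hxmem
          · exact fun y hy => hallr y hy
          · exact inner_zero_right _
          · intro y₁ y₂ _ _ hy₁ hy₂; rw [inner_add_right, hy₁, hy₂]; ring
          · intro r y _ hy; rw [real_inner_smul_right, hy]; ring
        have hx1 : ‖(x : E3)‖ = 1 := by
          have := x.2
          rwa [mem_sphere_iff_norm, sub_zero] at this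
        rw [real_inner_self_eq_norm_mul_norm, hx1] at hxx
        norm_num at hxx
    rw [real_inner_smul_right]
    have : (0:ℝ) < ‖z i‖⁻¹ := by
      rw [inv_pos, norm_pos_iff]; exact hz_ne i
    positivity
  -- part (d)
  · intro i j ℓ hij hil hjl
    constructor
    · rw [hθ]
      have h1 := inner_lt_one_of_ne (v i) (v j) (hv_norm i) (hv_norm j) (parta i j hij).1
      have h2 := neg_one_lt_inner_of_ne (v i) (v j) (hv_norm i) (hv_norm j) (parta i j hij).2
      exact ⟨Real.arccos_pos.mpr h1, arccos_lt_pi' h2⟩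
    · set c1 := cross3 (v i) (v j) with hc1_def
      set c2 := cross3 (v j) (v ℓ) with hc2_def
      have hc1 : c1 ≠ 0 :=
        cross_ne_zero _ _ (hv_norm i) (hv_norm j) (parta i j hij).1 (parta i j hij).2
      have hc2 : c2 ≠ 0 :=
        cross_ne_zero _ _ (hv_norm j) (hv_norm ℓ) (parta j ℓ hjl).1 (parta j ℓ hjl).2
      set n1 : E3 := ‖c1‖⁻¹ • c1 with hn1_def
      set n2 : E3 := ‖c2‖⁻¹ • c2 with hn2_def
      have hun1 : ‖n1‖ = 1 := norm_smul_inv_norm (𝕜 := ℝ) hc1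
      have hun2 : ‖n2‖ = 1 := norm_smul_inv_norm (𝕜 := ℝ) hc2
      have hkey1 : ⟪n1, v ℓ⟫ ≠ 0 := by
        rw [hn1_def, real_inner_smul_left, hc1_def, det3_eq_inner]
        exact mul_ne_zero (inv_ne_zero (norm_ne_zero_iff.mpr hc1)) (partb i j ℓ hij hil hjl)
      have hkey2 : ⟪n2, v ℓ⟫ = 0 := by
        rw [hn2_def, real_inner_smul_left, hc2_def, inner_cross_right, mul_zero]
      have hne1 : n2 ≠ n1 := by
        intro h; rw [h] at hkey2; exact hkey1 hkey2
      have hne2 : n2 ≠ -n1 := by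
        intro h; rw [h, inner_neg_left] at hkey2
        exact hkey1 (by linarith)
      have h1 := inner_lt_one_of_ne n1 n2 hun1 hun2 hne1
      have h2 := neg_one_lt_inner_of_ne n1 n2 hun1 hun2 hne2
      rw [hΘ]
      exact ⟨Real.arccos_pos.mpr h1, arccos_lt_pi' h2⟩
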